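/- Let g be a finite-dimensional complex Lie algebra admitting a nonsingular derivation D whose inverse D^{-1} is again a derivation. Then for the eigenspace decomposition with respect to the semisimple part of D, whenever [g_α, g_β] ≠ 0 one has β = ωα for a primitive third root of unity ω; in particular g is triangularly graded. -/

import Mathlib

open Module Finset Nat

namespace TriangularAux

variable {L : Type*} [LieRing L] [LieAlgebra ℂ L]

lemma pow_sub_smul_lie (D : LieDerivation ℂ L L) (α β : ℂ) (n : ℕ) (a b : L) :
    ((D.toLinearMap - (α + β) • (1 : Module.End ℂ L)) ^ n) ⁅a, b⁆ =
      ∑ ij ∈ antidiagonal n, n.choose ij.1 •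
        ⁅((D.toLinearMap - α • (1 : Module.End ℂ L)) ^ ij.1) a,
          ((D.toLinearMap - β • (1 : Module.End ℂ L)) ^ ij.2) b⁆ := by
  induction n with
  | zero => simp
  | succ n ih =>
    have step : ∀ u v : L, (D.toLinearMap - (α + β) • (1 : Module.End ℂ L)) ⁅u, v⁆ =
        ⁅(D.toLinearMap - α • (1 : Module.End ℂ L)) u, v⁆ +
          ⁅u, (D.toLinearMap - β • (1 : Module.End ℂ L)) v⁆ := by
      intro u v
      simp only [LieDerivation.coeFn_coe, LinearMap.sub_apply, LinearMap.smul_apply, Module.End.one_apply,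
        LinearMap.add_apply,
        D.apply_lie_eq_add, sub_lie, lie_sub, smul_lie, lie_smul, add_smul]
      abel
    rw [Finset.sum_antidiagonal_choose_succ_nsmul
      (M := L) (fun i j => ⁅((D.toLinearMap - α • (1 : Module.End ℂ L)) ^ i) a,
        ((D.toLinearMap - β • (1 : Module.End ℂ L)) ^ j) b⁆) n,
      _root_.pow_succ', Module.End.mul_apply, ih, map_sum]
    simp only [map_nsmul, step, smul_add, sum_add_distrib, ← Module.End.mul_apply, ← _root_.pow_succ']
    rw [add_comm]
    congr 1
    refine sum_congr rfl fun ⟨i, j⟩ hij => ?_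
    rw [n.choose_symm_of_eq_add (mem_antidiagonal.1 hij).symm]


lemma lie_mem_max (D : LieDerivation ℂ L L) {α β : ℂ} {x y : L}
    (hx : x ∈ Module.End.maxGenEigenspace (D.toLinearMap : Module.End ℂ L) α)
    (hy : y ∈ Module.End.maxGenEigenspace (D.toLinearMap : Module.End ℂ L) β) :
    ⁅x, y⁆ ∈ Module.End.maxGenEigenspace (D.toLinearMap : Module.End ℂ L) (α + β) := by
  rw [Module.End.mem_maxGenEigenspace] at hx hy ⊢
  obtain ⟨k, hk⟩ := hx
  obtain ⟨l, hl⟩ := hy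
  refine ⟨k + l, ?_⟩
  rw [pow_sub_smul_lie]
  apply Finset.sum_eq_zero
  rintro ⟨i, j⟩ hij
  rw [HasAntidiagonal.mem_antidiagonal] at hij
  rcases le_or_gt k i with hi | hi
  · rw [Module.End.pow_map_zero_of_le hi hk, zero_lie, smul_zero]
  · rw [Module.End.pow_map_zero_of_le (by omega : l ≤ j) hl, lie_zero, smul_zero]


lemma eigenspace_eq_max (D : LieDerivation ℂ L L) (S : Module.End ℂ L)
    (hS : S.IsSemisimple) (hN : IsNilpotent (D.toLinearMap - S))
    (hC : Commute D.toLinearMap S) (α : ℂ) :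
    S.eigenspace α = Module.End.maxGenEigenspace (D.toLinearMap : Module.End ℂ L) α := by
  refine le_antisymm ?_ ?_
  · intro x hx
    obtain ⟨n, hn⟩ := hN
    set N : Module.End ℂ L := D.toLinearMap - S with hNdef
    have hSN : Commute S N := (hC.symm).sub_right (Commute.refl S)
    have claim : ∀ m : ℕ, (((D.toLinearMap : Module.End ℂ L) - α • 1) ^ m) x = (N ^ m) x ∧
        (N ^ m) x ∈ S.eigenspace α := by
      intro m
      induction m with
      | zero => exact ⟨rfl, hx⟩
      | succ m ih =>
        have hmem : (N ^ m) x ∈ S.eigenspace α := ih.2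
        have hmem' : N ((N ^ m) x) ∈ S.eigenspace α :=
          Module.End.mapsTo_genEigenspace_of_comm hSN α 1 hmem
        constructor
        · rw [_root_.pow_succ', Module.End.mul_apply, ih.1, _root_.pow_succ',
            Module.End.mul_apply]
          have hSx : S ((N ^ m) x) = α • (N ^ m) x := Module.End.mem_eigenspace_iff.mp hmem
          rw [hNdef] at hSx
          simp [hNdef, LinearMap.sub_apply, hSx]
        · rwa [_root_.pow_succ', Module.End.mul_apply]
    rw [Module.End.mem_maxGenEigenspace]
    exact ⟨n, by rw [(claim n).1, hn]; rfl⟩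
  · intro x hx
    have := Module.End.apply_eq_of_mem_of_comm_of_isFinitelySemisimple_of_isNil hx hC
      hS.isFinitelySemisimple hN
    exact Module.End.mem_eigenspace_iff.mpr this

lemma max_zero_eq_bot (D E : LieDerivation ℂ L L)
    (hED : E.toLinearMap ∘ₗ D.toLinearMap = LinearMap.id) :
    Module.End.maxGenEigenspace (D.toLinearMap : Module.End ℂ L) 0 = ⊥ := by
  have hinj : Function.Injective D.toLinearMap := by
    intro a b h
    have : (E.toLinearMap ∘ₗ D.toLinearMap) a = (E.toLinearMap ∘ₗ D.toLinearMap) b := by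
      simp [LinearMap.comp_apply, h]
    simpa [hED] using this
  rw [eq_bot_iff]
  intro x hx
  rw [Module.End.mem_maxGenEigenspace] at hx
  obtain ⟨k, hk⟩ := hx
  simp only [zero_smul, sub_zero] at hk
  have hinjk : ∀ k : ℕ, Function.Injective ((D.toLinearMap : Module.End ℂ L) ^ k) := by
    intro k
    induction k with
    | zero => simpa [Module.End.one_eq_id] using Function.injective_id
    | succ k ihk =>
      rw [_root_.pow_succ, Module.End.mul_eq_comp, LinearMap.coe_comp]
      exact Function.Injective.comp ihk hinj
  simpa using hinjk k (a₂ := 0) (by simpa using hk)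

lemma max_le_inv (D E : LieDerivation ℂ L L)
    (hED : E.toLinearMap ∘ₗ D.toLinearMap = LinearMap.id)
    (hDE : D.toLinearMap ∘ₗ E.toLinearMap = LinearMap.id)
    {α : ℂ} (hα : α ≠ 0) :
    Module.End.maxGenEigenspace (D.toLinearMap : Module.End ℂ L) α ≤
      Module.End.maxGenEigenspace (E.toLinearMap : Module.End ℂ L) α⁻¹ := by
  set Dl : Module.End ℂ L := D.toLinearMap
  set El : Module.End ℂ L := E.toLinearMap
  have hED' : El * Dl = 1 := hED
  have hDE' : Dl * El = 1 := hDE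
  intro x hx
  rw [Module.End.mem_maxGenEigenspace] at hx ⊢
  obtain ⟨k, hk⟩ := hx
  refine ⟨k, ?_⟩
  have key : El - α⁻¹ • 1 = (-α⁻¹) • (El * (Dl - α • 1)) := by
    rw [mul_sub, hED', Algebra.mul_smul_comm, mul_one, smul_sub, smul_smul, neg_mul,
      inv_mul_cancel₀ hα]
    module
  have hcomm : Commute El (Dl - α • 1) := by
    have h1 : Commute El Dl := by rw [Commute, SemiconjBy, hED', hDE']
    exact h1.sub_right ((Commute.one_right El).smul_right α)
  rw [key, smul_pow, hcomm.mul_pow, LinearMap.smul_apply, Module.End.mul_apply, hk,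
    map_zero, smul_zero]

lemma cube_root_of_unity {α β : ℂ} (hα : α ≠ 0) (hβ : β ≠ 0) (hab : α + β ≠ 0)
    (h : α⁻¹ + β⁻¹ = (α + β)⁻¹) : ∃ ω : ℂ, ω ^ 3 = 1 ∧ ω ≠ 1 ∧ β = ω * α := by
  have key : α ^ 2 + α * β + β ^ 2 = 0 := by
    field_simp at h
    linear_combination h
  refine ⟨β / α, ?_, ?_, by field_simp⟩
  · field_simp
    linear_combination (β - α) * key
  · intro h1
    rw [div_eq_one_iff_eq hα] at h1
    have h3 : (3 : ℂ) * α ^ 2 = 0 := by rw [h1] at key; linear_combination key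
    rcases mul_eq_zero.mp h3 with h | h
    · exact three_ne_zero h
    · exact hα (by simpa using pow_eq_zero_iff (n := 2) two_ne_zero |>.mp h)

end TriangularAux


/-- A complex Lie algebra is hexagonally graded if it admits a grading by sixth roots of
unity, multiplicative on brackets, with the components indexed by third roots of unity
central. -/
def IsHexagonallyGraded (L : Type*) [LieRing L] [LieAlgebra ℂ L] : Prop :=
  ∃ g : ℂ → Submodule ℂ L,
    (∀ ζ : ℂ, ζ ^ 6 ≠ 1 → g ζ = ⊥) ∧
    (DirectSum.IsInternal fun ζ : ℂ => g ζ) ∧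
    (∀ ζ η : ℂ, ∀ x ∈ g ζ, ∀ y ∈ g η, ⁅x, y⁆ ∈ g (ζ * η)) ∧
    (∀ ζ : ℂ, ζ ^ 3 = 1 → ∀ x ∈ g ζ, ∀ y : L, ⁅x, y⁆ = 0)

/-- A complex Lie algebra is triangularly graded if it admits an additive grading by the
nonzero complex numbers such that nonvanishing of `⁅g α, g β⁆` forces `β = ω α` for a
primitive third root of unity `ω`. -/
def IsTriangularlyGraded (L : Type*) [LieRing L] [LieAlgebra ℂ L] : Prop :=
  ∃ g : ℂ → Submodule ℂ L,
    g 0 = ⊥ ∧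
    {α : ℂ | g α ≠ ⊥}.Finite ∧
    (DirectSum.IsInternal fun α : ℂ => g α) ∧
    (∀ α β : ℂ, ∀ x ∈ g α, ∀ y ∈ g β, ⁅x, y⁆ ∈ g (α + β)) ∧
    (∀ α β : ℂ, (∃ x ∈ g α, ∃ y ∈ g β, ⁅x, y⁆ ≠ (0 : L)) →
      ∃ ω : ℂ, ω ^ 3 = 1 ∧ ω ≠ 1 ∧ β = ω * α)

theorem triangular_grading_of_invertible_derivation (L : Type*) [LieRing L]
    [LieAlgebra ℂ L] [FiniteDimensional ℂ L]
    (D E : LieDerivation ℂ L L)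
    (hED : E.toLinearMap ∘ₗ D.toLinearMap = LinearMap.id)
    (hDE : D.toLinearMap ∘ₗ E.toLinearMap = LinearMap.id)
    (S : Module.End ℂ L)
    (hS : S.IsSemisimple) (hN : IsNilpotent (D.toLinearMap - S))
    (hC : Commute D.toLinearMap S) :
    (∀ α β : ℂ,
        (∃ x ∈ S.eigenspace α, ∃ y ∈ S.eigenspace β, ⁅x, y⁆ ≠ (0 : L)) →
        ∃ ω : ℂ, ω ^ 3 = 1 ∧ ω ≠ 1 ∧ β = ω * α) ∧
      IsTriangularlyGraded L := by
  have hSD : ∀ α : ℂ, S.eigenspace α =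
      Module.End.maxGenEigenspace (D.toLinearMap : Module.End ℂ L) α :=
    TriangularAux.eigenspace_eq_max D S hS hN hC
  have hzero : Module.End.maxGenEigenspace (D.toLinearMap : Module.End ℂ L) 0 = ⊥ :=
    TriangularAux.max_zero_eq_bot D E hED
  have hmain : ∀ α β : ℂ, (∃ x ∈ S.eigenspace α, ∃ y ∈ S.eigenspace β, ⁅x, y⁆ ≠ (0 : L)) →
      ∃ ω : ℂ, ω ^ 3 = 1 ∧ ω ≠ 1 ∧ β = ω * α := by
    rintro α β ⟨x, hx, y, hy, hne⟩
    rw [hSD α] at hx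
    rw [hSD β] at hy
    have hxy := TriangularAux.lie_mem_max D hx hy
    have hα : α ≠ 0 := by
      rintro rfl
      rw [hzero] at hx
      exact hne (by rw [(Submodule.mem_bot ℂ).mp hx, zero_lie])
    have hβ : β ≠ 0 := by
      rintro rfl
      rw [hzero] at hy
      exact hne (by rw [(Submodule.mem_bot ℂ).mp hy, lie_zero])
    have hab : α + β ≠ 0 := by
      intro h
      rw [h, hzero] at hxy
      exact hne ((Submodule.mem_bot ℂ).mp hxy)
    have hxE := TriangularAux.max_le_inv D E hED hDE hα hx
    have hyE := TriangularAux.max_le_inv D E hED hDE hβ hy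
    have hxyE := TriangularAux.lie_mem_max E hxE hyE
    have hxyE2 := TriangularAux.max_le_inv D E hED hDE hab hxy
    have heq : α⁻¹ + β⁻¹ = (α + β)⁻¹ := by
      by_contra hne2
      exact hne ((Submodule.mem_bot ℂ).mp ((Module.End.disjoint_genEigenspace
        (E.toLinearMap : Module.End ℂ L) hne2 ⊤ ⊤).le_bot ⟨hxyE, hxyE2⟩))
    exact TriangularAux.cube_root_of_unity hα hβ hab heq
  refine ⟨hmain, fun α => S.eigenspace α, ?_, ?_, ?_, ?_, hmain⟩
  · show S.eigenspace 0 = ⊥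
    rw [hSD 0, hzero]
  · exact Set.Finite.subset S.finite_hasEigenvalue (fun α hα => hα)
  · rw [DirectSum.isInternal_submodule_iff_iSupIndep_and_iSup_eq_top]
    refine ⟨S.eigenspaces_iSupIndep, ?_⟩
    calc ⨆ α : ℂ, S.eigenspace α
        = ⨆ α : ℂ, Module.End.maxGenEigenspace (D.toLinearMap : Module.End ℂ L) α := by
          simp_rw [hSD]
      _ = ⊤ := Module.End.iSup_maxGenEigenspace_eq_top _
  · intro α β x hx y hy
    simp only at hx hy
    show ⁅x, y⁆ ∈ S.eigenspace (α + β)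
    rw [hSD α] at hx
    rw [hSD β] at hy
    rw [hSD (α + β)]
    exact TriangularAux.lie_mem_max D hx hy
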